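/- Let 2 ≤ i < j ≤ m−1, let n = 2q+1 be odd with q ≥ 1, and suppose m ≥ 2j−1. Then α_j ≱_PS α_i; that is, there exists a profile of n preferences over m candidates at which the i-approval rule α_i is manipulable but the j-approval rule α_j is not manipulable. -/
import Mathlib


/-- A preference order on `m` candidates: `σ c` is the position of candidate `c`
(position `0` is the most preferred). `σ c < σ d` means `c` is strictly preferred to `d`. -/
abbrev Pref (m : ℕ) := Fin m ≃ Fin m

/-- A voting rule for `n` voters and `m` candidates. -/
abbrev Rule (m n : ℕ) := (Fin n → Pref m) → Fin m

/-- Total score of candidate `c` under score vector `s` (indexed by position) at profile `P`. -/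
def score {m n : ℕ} (s : Fin m → ℕ) (P : Fin n → Pref m) (c : Fin m) : ℕ :=
  ∑ v, s (P v c)

/-- The scoring rule with score vector `s`: the winner is the candidate that is first in the
lexicographic tie-breaking order (i.e. has the least index) among those of maximal score. -/
def winner {m n : ℕ} [NeZero m] (s : Fin m → ℕ) (P : Fin n → Pref m) : Fin m :=
  (Finset.univ.filter fun c => ∀ d, score s P d ≤ score s P c).min' (by
    obtain ⟨c, -, hc⟩ := Finset.exists_max_image Finset.univ (score s P) Finset.univ_nonempty
    exact ⟨c, Finset.mem_filter.mpr ⟨Finset.mem_univ c, fun d => hc d (Finset.mem_univ d)⟩⟩)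

/-- `k`-approval, `α_k`: one point for each of the top `k` positions. -/
def approval (m n k : ℕ) [NeZero m] : Rule m n :=
  winner (fun r => if (r : ℕ) < k then 1 else 0)

/-- `k`-Borda, `β_k`: `max (0, k - r + 1)` points for (`1`-indexed) position `r`, i.e. `k - r`
(truncated subtraction) points for `0`-indexed position `r`. -/
def kBorda (m n k : ℕ) [NeZero m] : Rule m n :=
  winner (fun r => k - (r : ℕ))

/-- `f` is manipulable at profile `P`: some voter `v` can misreport some preference `Q` and
obtain an outcome strictly preferred (by `v`'s true preferences) to the sincere outcome. -/
def Manipulable {m n : ℕ} (f : Rule m n) (P : Fin n → Pref m) : Prop :=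
  ∃ (v : Fin n) (Q : Pref m), P v (f (Function.update P v Q)) < P v (f P)

/-- `f ≥_PS g` : every profile at which `g` is manipulable is one at which `f` is manipulable. -/
def MoreManip {m n : ℕ} (f g : Rule m n) : Prop :=
  ∀ P : Fin n → Pref m, Manipulable g P → Manipulable f P

/-! ### Auxiliary machinery -/

set_option maxHeartbeats 4000000

/-- Position function for type-A voters. -/
def fA (i j c : ℕ) : ℕ :=
  if c = 1 then 0 else if c = 0 then i else if c = 2 then j
  else if c ≤ i+1 then c-2 else if c ≤ j then c-1 else c

def gA (i j p : ℕ) : ℕ :=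
  if p = 0 then 1 else if p = i then 0 else if p = j then 2
  else if p ≤ i-1 then p+2 else if p ≤ j-1 then p+1 else p

/-- Position function for type-B voters. -/
def fB (i j c : ℕ) : ℕ :=
  if c = 2 then 0 else if c = 0 then i else if c = 1 then j
  else if c ≤ i+1 then c+j-2 else if c ≤ j then c-1 else if c ≤ j+i-1 then c-j else c

def gB (i j p : ℕ) : ℕ :=
  if p = 0 then 2 else if p = i then 0 else if p = j then 1
  else if p ≤ i-1 then p+j else if p ≤ j-1 then p+1 else if p ≤ j+i-1 then p-j+2 else p

/-- Position function for the manipulator. -/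
def fM (i j c : ℕ) : ℕ :=
  if c = 2 then 0 else if c = 1 then 1 else if c = 0 then i
  else if c ≤ i then c-1 else if c ≤ j then c+j-i-1 else if c ≤ 2*j-i-1 then c-j+i else c

def gM (i j p : ℕ) : ℕ :=
  if p = 0 then 2 else if p = 1 then 1 else if p = i then 0
  else if p ≤ i-1 then p+1 else if p ≤ j-1 then p+j-i else if p ≤ 2*j-i-1 then p-j+i+1 else p

/-- Position function for the manipulator's insincere ballot. -/
def fQ (i j c : ℕ) : ℕ :=
  if c = 2 then 0 else if c = 1 then i else if c = 0 then 1
  else if c ≤ i then c-1 else if c ≤ j then c+j-i-1 else if c ≤ 2*j-i-1 then c-j+i else c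

def gQ (i j p : ℕ) : ℕ :=
  if p = 0 then 2 else if p = 1 then 0 else if p = i then 1
  else if p ≤ i-1 then p+1 else if p ≤ j-1 then p+j-i else if p ≤ 2*j-i-1 then p-j+i+1 else p

section Perm

variable {i j m : ℕ}

lemma permA (hi : 2 ≤ i) (hij : i < j) (hm : 2*j-1 ≤ m) :
    ∀ c, c < m → (fA i j c < m ∧ gA i j c < m) ∧ gA i j (fA i j c) = c ∧ fA i j (gA i j c) = c := by
  intro c hc
  refine ⟨⟨?_, ?_⟩, ?_, ?_⟩
  · unfold fA; split_ifs <;> first | contradiction | omega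
  · unfold gA; split_ifs <;> first | contradiction | omega
  · unfold fA; split_ifs <;> (unfold gA; split_ifs <;> first | contradiction | omega)
  · unfold gA; split_ifs <;> (unfold fA; split_ifs <;> first | contradiction | omega)

lemma permB (hi : 2 ≤ i) (hij : i < j) (hm : 2*j-1 ≤ m) :
    ∀ c, c < m → (fB i j c < m ∧ gB i j c < m) ∧ gB i j (fB i j c) = c ∧ fB i j (gB i j c) = c := by
  intro c hc
  refine ⟨⟨?_, ?_⟩, ?_, ?_⟩
  · unfold fB; split_ifs <;> first | contradiction | omega
  · unfold gB; split_ifs <;> first | contradiction | omega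
  · unfold fB; split_ifs <;> (unfold gB; split_ifs <;> first | contradiction | omega)
  · unfold gB; split_ifs <;> (unfold fB; split_ifs <;> first | contradiction | omega)

lemma permM (hi : 2 ≤ i) (hij : i < j) (hm : 2*j-1 ≤ m) :
    ∀ c, c < m → (fM i j c < m ∧ gM i j c < m) ∧ gM i j (fM i j c) = c ∧ fM i j (gM i j c) = c := by
  intro c hc
  refine ⟨⟨?_, ?_⟩, ?_, ?_⟩
  · unfold fM; split_ifs <;> first | contradiction | omega
  · unfold gM; split_ifs <;> first | contradiction | omega
  · unfold fM; split_ifs <;> (unfold gM; split_ifs <;> first | contradiction | omega)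
  · unfold gM; split_ifs <;> (unfold fM; split_ifs <;> first | contradiction | omega)

lemma permQ (hi : 2 ≤ i) (hij : i < j) (hm : 2*j-1 ≤ m) :
    ∀ c, c < m → (fQ i j c < m ∧ gQ i j c < m) ∧ gQ i j (fQ i j c) = c ∧ fQ i j (gQ i j c) = c := by
  intro c hc
  refine ⟨⟨?_, ?_⟩, ?_, ?_⟩
  · unfold fQ; split_ifs <;> first | contradiction | omega
  · unfold gQ; split_ifs <;> first | contradiction | omega
  · unfold fQ; split_ifs <;> (unfold gQ; split_ifs <;> first | contradiction | omega)
  · unfold gQ; split_ifs <;> (unfold fQ; split_ifs <;> first | contradiction | omega)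

lemma keyAB (hi : 2 ≤ i) (hij : i < j) (c : ℕ) : ¬ (fA i j c < i ∧ fB i j c < i) := by
  unfold fA fB; split_ifs <;> first | contradiction | omega

lemma keyJ (hi : 2 ≤ i) (hij : i < j) (c : ℕ) (hc : c ≠ 0) :
    ¬ (fA i j c < j ∧ fB i j c < j ∧ fM i j c < j) := by
  unfold fA fB fM; split_ifs <;> first | contradiction | omega

end Perm

/-- Build a preference from nat-level position functions. -/
def mkPerm {m : ℕ} (f g : ℕ → ℕ)
    (h : ∀ c, c < m → (f c < m ∧ g c < m) ∧ g (f c) = c ∧ f (g c) = c) : Pref m where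
  toFun c := ⟨f c.1, (h c.1 c.2).1.1⟩
  invFun c := ⟨g c.1, (h c.1 c.2).1.2⟩
  left_inv c := Fin.ext (h c.1 c.2).2.1
  right_inv c := Fin.ext (h c.1 c.2).2.2

@[simp] lemma mkPerm_apply {m : ℕ} (f g : ℕ → ℕ) (h) (c : Fin m) :
    ((mkPerm f g h) c : ℕ) = f c.1 := rfl

/-- The profile: `q` voters of type A, `q` of type B, one manipulator `M`. -/
def prof {m : ℕ} (q : ℕ) (A B M : Pref m) : Fin (2*q+1) → Pref m :=
  fun v => if (v : ℕ) < q then A else if (v : ℕ) < 2*q then B else M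

lemma score_prof {m : ℕ} (q : ℕ) (s : Fin m → ℕ) (A B M : Pref m) (c : Fin m) :
    score s (prof q A B M) c = q * s (A c) + q * s (B c) + s (M c) := by
  unfold score prof
  rw [Finset.sum_congr rfl (fun (v : Fin (2*q+1)) (_ : v ∈ Finset.univ) =>
    show s ((if (v:ℕ) < q then A else if (v:ℕ) < 2*q then B else M) c)
       = if (v:ℕ) < q then s (A c) else if (v:ℕ) < 2*q then s (B c) else s (M c) by
      split_ifs <;> rfl)]
  rw [Fin.sum_univ_eq_sum_range (fun k => if k < q then s (A c) else if k < 2*q then s (B c) else s (M c))]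
  rw [Finset.sum_range_succ]
  rw [Finset.range_eq_Ico, ← Finset.sum_Ico_consecutive _ (Nat.zero_le q) (by omega : q ≤ 2*q)]
  have e1 : (∑ k ∈ Finset.Ico 0 q,
      (if k < q then s (A c) else if k < 2*q then s (B c) else s (M c))) = q * s (A c) := by
    rw [Finset.sum_congr rfl (fun k hk => if_pos (Finset.mem_Ico.mp hk).2)]
    rw [Finset.sum_const, Nat.card_Ico, smul_eq_mul, Nat.sub_zero]
  have e2 : (∑ k ∈ Finset.Ico q (2*q),
      (if k < q then s (A c) else if k < 2*q then s (B c) else s (M c))) = q * s (B c) := by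
    rw [Finset.sum_congr rfl (fun k hk => by
      have h := Finset.mem_Ico.mp hk
      rw [if_neg (by omega), if_pos h.2])]
    rw [Finset.sum_const, Nat.card_Ico, smul_eq_mul, show 2*q - q = q by omega]
  have e3 : (if 2*q < q then s (A c) else if 2*q < 2*q then s (B c) else s (M c)) = s (M c) := by
    rw [if_neg (by omega), if_neg (by omega)]
  rw [e1, e2, e3]

lemma prof_update {m : ℕ} (q : ℕ) (A B M Q : Pref m) (v : Fin (2*q+1)) (hv : (v : ℕ) = 2*q) :
    Function.update (prof q A B M) v Q = prof q A B Q := by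
  funext u
  rcases eq_or_ne u v with h | h
  · subst h
    rw [Function.update_self]
    unfold prof
    rw [if_neg (by omega), if_neg (by omega)]
  · rw [Function.update_of_ne h]
    unfold prof
    have hu2 : (u:ℕ) < 2*q+1 := u.2
    have hune : (u:ℕ) ≠ 2*q := fun hh => h (Fin.ext (by omega))
    split_ifs with h1 h2
    · rfl
    · rfl
    · exact absurd (by omega : (u:ℕ) < 2*q) h2

lemma score_update {m n : ℕ} (s : Fin m → ℕ) (P : Fin n → Pref m) (v : Fin n) (Q : Pref m)
    (c : Fin m) :
    score s (Function.update P v Q) c + s (P v c) = score s P c + s (Q c) := by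
  unfold score
  rw [Finset.sum_congr rfl (fun (u : Fin n) (_ : u ∈ Finset.univ) =>
    show s (Function.update P v Q u c) = Function.update (fun u => s (P u c)) v (s (Q c)) u by
      rcases eq_or_ne u v with h | h
      · subst h; simp
      · simp [Function.update_of_ne h])]
  rw [Finset.sum_update_of_mem (Finset.mem_univ v)]
  rw [← Finset.sum_erase_add Finset.univ (fun u => s (P u c)) (Finset.mem_univ v)]
  rw [Finset.sdiff_singleton_eq_erase]
  omega

lemma winner_spec {m n : ℕ} [NeZero m] (s : Fin m → ℕ) (P : Fin n → Pref m) (d : Fin m) :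
    score s P d ≤ score s P (winner s P) := by
  have h : winner s P ∈ Finset.univ.filter fun c => ∀ d, score s P d ≤ score s P c := by
    unfold winner; exact Finset.min'_mem _ _
  exact (Finset.mem_filter.mp h).2 d

lemma winner_le {m n : ℕ} [NeZero m] (s : Fin m → ℕ) (P : Fin n → Pref m) (w : Fin m)
    (hw : ∀ d, score s P d ≤ score s P w) : winner s P ≤ w := by
  unfold winner
  exact Finset.min'_le _ _ (Finset.mem_filter.mpr ⟨Finset.mem_univ _, hw⟩)

lemma winner_eq {m n : ℕ} [NeZero m] (s : Fin m → ℕ) (P : Fin n → Pref m) (w : Fin m)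
    (hw : ∀ d, score s P d ≤ score s P w)
    (hlt : ∀ c, c < w → ∃ d, ¬ (score s P d ≤ score s P c)) : winner s P = w := by
  rcases lt_or_eq_of_le (winner_le s P w hw) with h | h
  · obtain ⟨d, hd⟩ := hlt _ h
    exact absurd (winner_spec s P d) hd
  · exact h

/-- For `2 ≤ i < j ≤ m-1`, `n = 2q+1` odd with `q ≥ 1`, and `m ≥ 2j-1`: `α_j ≱_PS α_i`. -/
theorem stmt_2 (m n q i j : ℕ) [NeZero m] (hi : 2 ≤ i) (hij : i < j) (hj : j ≤ m - 1)
    (hq : 1 ≤ q) (hn : n = 2 * q + 1) (hm : 2 * j - 1 ≤ m) :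
    ∃ P : Fin n → Pref m,
      Manipulable (approval m n i) P ∧ ¬ Manipulable (approval m n j) P := by
  subst hn
  have hm5 : 5 ≤ m := by omega
  set A : Pref m := mkPerm (fA i j) (gA i j) (permA hi hij hm) with hA
  set B : Pref m := mkPerm (fB i j) (gB i j) (permB hi hij hm) with hB
  set M : Pref m := mkPerm (fM i j) (gM i j) (permM hi hij hm) with hMdef
  set Qp : Pref m := mkPerm (fQ i j) (gQ i j) (permQ hi hij hm) with hQ
  set P : Fin (2*q+1) → Pref m := prof q A B M with hP
  set c0 : Fin m := ⟨0, by omega⟩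
  set c1 : Fin m := ⟨1, by omega⟩
  set c2 : Fin m := ⟨2, by omega⟩
  set v : Fin (2*q+1) := ⟨2*q, by omega⟩
  have c0v : (c0 : ℕ) = 0 := rfl
  have c1v : (c1 : ℕ) = 1 := rfl
  have c2v : (c2 : ℕ) = 2 := rfl
  set sI : Fin m → ℕ := fun r => if (r : ℕ) < i then 1 else 0 with hsI
  set sJ : Fin m → ℕ := fun r => if (r : ℕ) < j then 1 else 0 with hsJ
  -- basic position values
  have valA : ∀ x : Fin m, ((A x : Fin m) : ℕ) = fA i j x.1 := fun x => rfl
  have valB : ∀ x : Fin m, ((B x : Fin m) : ℕ) = fB i j x.1 := fun x => rfl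
  have valM : ∀ x : Fin m, ((M x : Fin m) : ℕ) = fM i j x.1 := fun x => rfl
  have valQ : ∀ x : Fin m, ((Qp x : Fin m) : ℕ) = fQ i j x.1 := fun x => rfl
  -- score in nat-terms
  have scof : ∀ (k : ℕ) (X Y Z : Pref m) (c : Fin m),
      score (fun r : Fin m => if (r : ℕ) < k then 1 else 0) (prof q X Y Z) c
        = q * (if ((X c : Fin m) : ℕ) < k then 1 else 0)
          + q * (if ((Y c : Fin m) : ℕ) < k then 1 else 0)
          + (if ((Z c : Fin m) : ℕ) < k then 1 else 0) := by
    intro k X Y Z c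
    exact score_prof q _ X Y Z c
  refine ⟨P, ?_, ?_⟩
  · -- α_i manipulable
    refine ⟨v, Qp, ?_⟩
    have hup : Function.update P v Qp = prof q A B Qp := prof_update q A B M Qp v rfl
    -- sincere i-winner is candidate 1
    have s1 : score sI P c1 = q + 1 := by
      rw [hP, hsI, scof i A B M c1, valA, valB, valM]
      show q * (if fA i j 1 < i then 1 else 0) + q * (if fB i j 1 < i then 1 else 0)
          + (if fM i j 1 < i then 1 else 0) = q + 1
      rw [show fA i j 1 = 0 from rfl, show fB i j 1 = j from rfl, show fM i j 1 = 1 from rfl]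
      split_ifs <;> omega
    have s0 : score sI P c0 = 0 := by
      rw [hP, hsI, scof i A B M c0, valA, valB, valM]
      show q * (if fA i j 0 < i then 1 else 0) + q * (if fB i j 0 < i then 1 else 0)
          + (if fM i j 0 < i then 1 else 0) = 0
      rw [show fA i j 0 = i from rfl, show fB i j 0 = i from rfl, show fM i j 0 = i from rfl]
      split_ifs <;> omega
    have wI : approval m (2*q+1) i P = c1 := by
      show winner sI P = c1
      apply winner_eq
      · intro d
        rw [s1, hP, hsI, scof i A B M d, valA, valB, valM]
        have hk := keyAB hi hij d.1
        rcases not_and_or.mp hk with h | h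
        · rw [if_neg h]; split_ifs <;> omega
        · rw [if_neg h]; split_ifs <;> omega
      · intro c hc
        have hcv : (c : ℕ) < 1 := by
          have := hc
          rw [Fin.lt_def, c1v] at this
          exact this
        have : c = c0 := Fin.ext (by rw [c0v]; omega)
        subst this
        exact ⟨c1, by rw [s0, s1]; omega⟩
    -- insincere i-winner is candidate 2
    have s2' : score sI (prof q A B Qp) c2 = q + 1 := by
      rw [hsI, scof i A B Qp c2, valA, valB, valQ]
      show q * (if fA i j 2 < i then 1 else 0) + q * (if fB i j 2 < i then 1 else 0)
          + (if fQ i j 2 < i then 1 else 0) = q + 1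
      rw [show fA i j 2 = j from rfl, show fB i j 2 = 0 from rfl, show fQ i j 2 = 0 from rfl]
      split_ifs <;> omega
    have s0' : score sI (prof q A B Qp) c0 = 1 := by
      rw [hsI, scof i A B Qp c0, valA, valB, valQ]
      show q * (if fA i j 0 < i then 1 else 0) + q * (if fB i j 0 < i then 1 else 0)
          + (if fQ i j 0 < i then 1 else 0) = 1
      rw [show fA i j 0 = i from rfl, show fB i j 0 = i from rfl, show fQ i j 0 = 1 from rfl]
      split_ifs <;> omega
    have s1' : score sI (prof q A B Qp) c1 = q := by
      rw [hsI, scof i A B Qp c1, valA, valB, valQ]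
      show q * (if fA i j 1 < i then 1 else 0) + q * (if fB i j 1 < i then 1 else 0)
          + (if fQ i j 1 < i then 1 else 0) = q
      rw [show fA i j 1 = 0 from rfl, show fB i j 1 = j from rfl, show fQ i j 1 = i from rfl]
      split_ifs <;> omega
    have wQ : approval m (2*q+1) i (Function.update P v Qp) = c2 := by
      rw [hup]
      show winner sI (prof q A B Qp) = c2
      apply winner_eq
      · intro d
        rw [s2', hsI, scof i A B Qp d, valA, valB, valQ]
        have hk := keyAB hi hij d.1
        rcases not_and_or.mp hk with h | h
        · rw [if_neg h]; split_ifs <;> omega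
        · rw [if_neg h]; split_ifs <;> omega
      · intro c hc
        have hcv : (c : ℕ) < 2 := by
          have := hc
          rw [Fin.lt_def, c2v] at this
          exact this
        rcases (by omega : (c : ℕ) = 0 ∨ (c : ℕ) = 1) with h | h
        · have : c = c0 := Fin.ext (by rw [c0v]; omega)
          subst this
          exact ⟨c2, by rw [s0', s2']; omega⟩
        · have : c = c1 := Fin.ext (by rw [c1v]; omega)
          subst this
          exact ⟨c2, by rw [s1', s2']; omega⟩
    rw [wI, wQ]
    -- P v = M, and M prefers 2 to 1
    have hPv : P v = M := by
      rw [hP]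
      unfold prof
      rw [if_neg (show ¬((v:ℕ) < q) by exact (by omega : ¬(2*q < q))),
          if_neg (show ¬((v:ℕ) < 2*q) by exact (by omega : ¬(2*q < 2*q)))]
    rw [hPv]
    show ((M c2 : Fin m) : ℕ) < ((M c1 : Fin m) : ℕ)
    rw [valM, valM]
    show fM i j 2 < fM i j 1
    rw [show fM i j 2 = 0 from rfl, show fM i j 1 = 1 from rfl]
    omega
  · -- α_j not manipulable
    intro hman
    obtain ⟨v', Q', hlt⟩ := hman
    -- every candidate's j-score is at most 2q+1, and candidate 0 has exactly 2q+1
    have s0j : score sJ P c0 = 2*q + 1 := by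
      rw [hP, hsJ, scof j A B M c0, valA, valB, valM]
      show q * (if fA i j 0 < j then 1 else 0) + q * (if fB i j 0 < j then 1 else 0)
          + (if fM i j 0 < j then 1 else 0) = 2*q + 1
      rw [show fA i j 0 = i from rfl, show fB i j 0 = i from rfl, show fM i j 0 = i from rfl]
      split_ifs <;> omega
    have sboundj : ∀ d : Fin m, d ≠ c0 → score sJ P d ≤ 2*q := by
      intro d hd
      have hd0 : d.1 ≠ 0 := fun h => hd (Fin.ext h)
      have hk := keyJ hi hij d.1 hd0
      rw [hP, hsJ, scof j A B M d, valA, valB, valM]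
      rcases not_and_or.mp hk with h | h
      · rw [if_neg h]; split_ifs <;> omega
      · rcases not_and_or.mp h with h' | h'
        · rw [if_neg h']; split_ifs <;> omega
        · rw [if_neg h']; split_ifs <;> omega
    have wJ : approval m (2*q+1) j P = c0 := by
      show winner sJ P = c0
      apply winner_eq
      · intro d
        rcases eq_or_ne d c0 with h | h
        · rw [h]
        · rw [s0j]; exact (sboundj d h).trans (by omega)
      · intro c hc
        exact absurd hc (by rw [Fin.lt_def, c0v]; omega)
    rw [wJ] at hlt
    set w' : Fin m := approval m (2*q+1) j (Function.update P v' Q') with hw'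
    -- position of candidate 0 on every sincere ballot is i
    have hpos0 : ((P v' c0 : Fin m) : ℕ) = i := by
      rw [hP]
      unfold prof
      split_ifs <;> rfl
    have hw'ne : w' ≠ c0 := by
      intro h
      rw [h] at hlt
      exact lt_irrefl _ hlt
    have hposw : ((P v' w' : Fin m) : ℕ) < i := by
      have := hlt
      rw [Fin.lt_def, hpos0] at this
      exact this
    -- score bookkeeping
    have hupd_w := score_update sJ P v' Q' w'
    have hupd_0 := score_update sJ P v' Q' c0
    have e1 : sJ (P v' w') = 1 := by
      rw [hsJ]
      exact if_pos (by omega)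
    have e2 : sJ (P v' c0) = 1 := by
      rw [hsJ]
      exact if_pos (by omega)
    have e3 : sJ (Q' w') ≤ 1 := by simp only [hsJ]; split_ifs <;> omega
    have e4 : sJ (Q' c0) ≤ 1 := by simp only [hsJ]; split_ifs <;> omega
    have e5 : sJ (Q' c0) ≥ 0 := Nat.zero_le _
    have hsw : score sJ P w' ≤ 2*q := sboundj w' hw'ne
    -- updated scores
    have hW : score sJ (Function.update P v' Q') w' ≤ 2*q := by omega
    have h0 : 2*q ≤ score sJ (Function.update P v' Q') c0 := by
      rw [s0j] at hupd_0; omega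
    have hmax' : ∀ d, score sJ (Function.update P v' Q') d
        ≤ score sJ (Function.update P v' Q') c0 := by
      intro d
      have hws := winner_spec sJ (Function.update P v' Q') d
      have hw2 : w' = winner sJ (Function.update P v' Q') := hw'
      rw [← hw2] at hws
      omega
    have : w' ≤ c0 := by
      rw [hw']
      exact winner_le sJ (Function.update P v' Q') c0 hmax'
    have hle : (w' : ℕ) ≤ 0 := by
      rw [Fin.le_def, c0v] at this
      exact this
    exact hw'ne (Fin.ext (by rw [c0v]; omega))
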